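/- arXiv:1001.1875 — 2 statements merged into one kernel-verified Lean document; each statement's English description precedes it below -/
import Mathlib

section
/- Let Λ = 0, M > 0, A₀ ∈ (0,1), and define v(ρ, E)² = (f(ρ)/A₀)(1 - f(ρ)/(A₀E²)) with f(ρ) = 1 - 2M/r(ρ) where r(ρ) → ∞ as ρ → ∞. Then lim_{ρ→∞} v(ρ,E)² = (1/A₀)(1 - 1/(A₀E²)), and for all sufficiently large E this limit exceeds 1. Moreover v(ρ,E)² < 1/A₀ for all ρ, E. -/
/-- Proposition 2 (Schwarzschild case, `Λ = 0`): with `A₀ ∈ (0,1)`,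
`f(ρ) = 1 - 2M/r(ρ)` and `r(ρ) → ∞`, the Fermi speed squared tends to
`(1/A₀)(1 - 1/(A₀E²))`, which exceeds `1` for all sufficiently large `E`;
moreover the Fermi speed squared is always below `1/A₀`. -/
theorem stmt_8 (M A₀ : ℝ) (r : ℝ → ℝ)
    (hM : 0 < M) (hA₀ : 0 < A₀) (hA₁ : A₀ < 1)
    (hr : Filter.Tendsto r Filter.atTop Filter.atTop)
    (hext : ∀ ρ : ℝ, 2 * M < r ρ) :
    (∀ E : ℝ, 0 < E →
        Filter.Tendsto
          (fun ρ : ℝ =>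
            ((1 - 2 * M / r ρ) / A₀) * (1 - (1 - 2 * M / r ρ) / (A₀ * E ^ 2)))
          Filter.atTop (nhds ((1 / A₀) * (1 - 1 / (A₀ * E ^ 2))))) ∧
      (∃ E₁ : ℝ, ∀ E : ℝ, E₁ ≤ E → 1 < (1 / A₀) * (1 - 1 / (A₀ * E ^ 2))) ∧
      (∀ ρ E : ℝ, 0 < E →
        ((1 - 2 * M / r ρ) / A₀) * (1 - (1 - 2 * M / r ρ) / (A₀ * E ^ 2))
          < 1 / A₀) := by
  have hf : Filter.Tendsto (fun ρ => 1 - 2 * M / r ρ) Filter.atTop (nhds 1) := by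
    have h0 : Filter.Tendsto (fun ρ => 2 * M / r ρ) Filter.atTop (nhds 0) := by
      simpa [div_eq_mul_inv] using Filter.Tendsto.const_mul (2 * M) (hr.inv_tendsto_atTop)
    simpa using (tendsto_const_nhds (x := (1 : ℝ))).sub h0
  refine ⟨?_, ?_, ?_⟩
  · intro E hE
    have hAE : A₀ * E ^ 2 ≠ 0 := by positivity
    have := (hf.div_const A₀).mul ((tendsto_const_nhds (x := (1:ℝ))).sub
      (hf.div_const (A₀ * E ^ 2)))
    simpa [one_div, div_eq_mul_inv] using this
  · refine ⟨1 + 1 / (A₀ * (1 - A₀)), fun E hE => ?_⟩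
    have hden : 0 < A₀ * (1 - A₀) := by nlinarith
    have h1 : (1 : ℝ) ≤ E := by
      have : 0 < 1 / (A₀ * (1 - A₀)) := by positivity
      linarith
    have hE2 : 1 / (A₀ * (1 - A₀)) < E ^ 2 := by nlinarith
    have hE2pos : 0 < E ^ 2 := by nlinarith
    have key : 1 / (A₀ * E ^ 2) < 1 - A₀ := by
      rw [div_lt_iff₀ (by positivity)]
      rw [div_lt_iff₀ hden] at hE2
      nlinarith
    rw [one_div A₀, ← div_eq_inv_mul, lt_div_iff₀ hA₀]
    linarith
  · intro ρ E hE
    have hfρ : 0 < 1 - 2 * M / r ρ := by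
      have h2M : 0 < 2 * M := by linarith
      have hrρ : 0 < r ρ := lt_trans h2M (hext ρ)
      rw [sub_pos, div_lt_one hrρ]
      exact hext ρ
    have hfρ1 : 1 - 2 * M / r ρ < 1 := by
      have hrρ : 0 < r ρ := by nlinarith [hext ρ]
      have : 0 < 2 * M / r ρ := by positivity
      linarith
    have hpos : 0 < (1 - 2 * M / r ρ) / (A₀ * E ^ 2) := by positivity
    have h1 : ((1 - 2 * M / r ρ) / A₀) * (1 - (1 - 2 * M / r ρ) / (A₀ * E ^ 2))
        < (1 - 2 * M / r ρ) / A₀ := by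
      have hq : 0 < (1 - 2 * M / r ρ) / A₀ := by positivity
      nlinarith
    have h2 : (1 - 2 * M / r ρ) / A₀ < 1 / A₀ := by
      exact div_lt_div_of_pos_right hfρ1 hA₀
    linarith
end

section
/- The function h(ρ) = 1 - (1 - 2M/r(ρ) - Λr(ρ)²/3)/(1 - 2M/r₀ - Λr₀²/3) (i.e., ‖v_kin‖² at critical energy) satisfies h(ρ₀) = 0, h'(ρ₀) = 0, and h''(ρ₀) = 2(2M/r₀³ + Λ/3) = 2Λ, where r₀ = (3M/Λ)^{1/3}, r(ρ₀) = r₀, and r'(ρ) = √(1 - 2M/r(ρ) - Λr(ρ)²/3). -/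
/-- Hubble's law derivation: the critical-energy kinematic speed squared
`h(ρ) = 1 - f(r(ρ))/f(r₀)` (with `f(r) = 1 - 2M/r - Λr²/3`,
`r' = √(f(r))`, `r(ρ₀) = r₀ = (3M/Λ)^{1/3}`) satisfies `h(ρ₀) = 0`,
`h'(ρ₀) = 0` and `h''(ρ₀) = 2(2M/r₀³ + Λ/3) = 2Λ`. -/
theorem stmt_17 (M Λ ρ₀ r₀ : ℝ) (r : ℝ → ℝ)
    (hM : 0 < M) (hΛ : 0 < Λ)
    (hr₀ : r₀ = (3 * M / Λ) ^ ((1 : ℝ) / 3))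
    (hf₀ : 0 < 1 - 2 * M / r₀ - Λ * r₀ ^ 2 / 3)
    (hode : ∀ ρ : ℝ, deriv r ρ = Real.sqrt (1 - 2 * M / r ρ - Λ * (r ρ) ^ 2 / 3))
    (hinit : r ρ₀ = r₀) :
    (1 - (1 - 2 * M / r ρ₀ - Λ * (r ρ₀) ^ 2 / 3)
          / (1 - 2 * M / r₀ - Λ * r₀ ^ 2 / 3)) = 0 ∧
      deriv (fun ρ : ℝ =>
          1 - (1 - 2 * M / r ρ - Λ * (r ρ) ^ 2 / 3)
            / (1 - 2 * M / r₀ - Λ * r₀ ^ 2 / 3)) ρ₀ = 0 ∧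
      deriv (deriv (fun ρ : ℝ =>
          1 - (1 - 2 * M / r ρ - Λ * (r ρ) ^ 2 / 3)
            / (1 - 2 * M / r₀ - Λ * r₀ ^ 2 / 3))) ρ₀
        = 2 * (2 * M / r₀ ^ 3 + Λ / 3) ∧
      2 * (2 * M / r₀ ^ 3 + Λ / 3) = 2 * Λ := by
  have hcne : (1 - 2 * M / r₀ - Λ * r₀ ^ 2 / 3) ≠ 0 := ne_of_gt hf₀
  have hr₀pos : 0 < r₀ := by
    rw [hr₀]; exact Real.rpow_pos_of_pos (by positivity) _
  have hr₀ne : r₀ ≠ 0 := ne_of_gt hr₀pos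
  have hr3 : r₀ ^ 3 = 3 * M / Λ := by
    rw [hr₀, ← Real.rpow_natCast ((3*M/Λ) ^ ((1:ℝ)/3)) 3, ← Real.rpow_mul (by positivity)]
    norm_num
  have hΛr3 : Λ * r₀ ^ 3 = 3 * M := by
    rw [hr3]; field_simp
  have hA0 : 2*M/r₀^2 - 2*Λ*r₀/3 = 0 := by
    field_simp
    nlinarith [hΛr3]
  -- notation
  set c := 1 - 2 * M / r₀ - Λ * r₀ ^ 2 / 3 with hc_def
  have hc : 0 < c := hf₀
  have hs0 : 0 < Real.sqrt c := Real.sqrt_pos.mpr hc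
  -- key derivative lemma for F ∘ r
  have keyF : ∀ ρ : ℝ, 0 < r ρ → 0 < 1 - 2*M/r ρ - Λ*(r ρ)^2/3 →
      HasDerivAt (fun ρ => 1 - 2*M/r ρ - Λ*(r ρ)^2/3)
        ((2*M/(r ρ)^2 - 2*Λ*(r ρ)/3) * Real.sqrt (1 - 2*M/r ρ - Λ*(r ρ)^2/3)) ρ := by
    intro ρ hrpos hFpos
    have hsne : deriv r ρ ≠ 0 := by
      rw [hode ρ]; exact ne_of_gt (Real.sqrt_pos.mpr hFpos)
    have hr' : HasDerivAt r (Real.sqrt (1 - 2*M/r ρ - Λ*(r ρ)^2/3)) ρ := by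
      have := (differentiableAt_of_deriv_ne_zero hsne).hasDerivAt
      rwa [hode ρ] at this
    have hrne : r ρ ≠ 0 := ne_of_gt hrpos
    have h1 := (hasDerivAt_const ρ (2*M)).div hr' hrne
    have h2 := ((hr'.pow 2).const_mul Λ).div_const 3
    have h3 : HasDerivAt (fun ρ => 1 - 2*M/r ρ - Λ*(r ρ)^2/3) _ ρ := ((hasDerivAt_const ρ (1:ℝ)).sub h1).sub h2
    convert h3 using 1
    field_simp
    ring
  have key : ∀ ρ : ℝ, 0 < r ρ → 0 < 1 - 2*M/r ρ - Λ*(r ρ)^2/3 →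
      HasDerivAt (fun ρ => 1 - (1 - 2*M/r ρ - Λ*(r ρ)^2/3)/c)
        (-((2*M/(r ρ)^2 - 2*Λ*(r ρ)/3) * Real.sqrt (1 - 2*M/r ρ - Λ*(r ρ)^2/3))/c) ρ := by
    intro ρ h1 h2
    have h3 : HasDerivAt (fun ρ => 1 - (1 - 2*M/r ρ - Λ*(r ρ)^2/3)/c) _ ρ := (hasDerivAt_const ρ (1:ℝ)).sub ((keyF ρ h1 h2).div_const c)
    convert h3 using 1
    ring
  -- eventual positivity near ρ₀
  have hcont : ContinuousAt r ρ₀ := by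
    have hsne : deriv r ρ₀ ≠ 0 := by
      rw [hode ρ₀, hinit]; exact ne_of_gt hs0
    exact (differentiableAt_of_deriv_ne_zero hsne).continuousAt
  have hev1 : ∀ᶠ ρ in nhds ρ₀, 0 < r ρ :=
    hcont.eventually (eventually_gt_nhds (by rw [hinit]; exact hr₀pos))
  have hFcont : ContinuousAt (fun ρ => 1 - 2*M/r ρ - Λ*(r ρ)^2/3) ρ₀ := by
    have hrne : r ρ₀ ≠ 0 := by rw [hinit]; exact hr₀ne
    exact (continuousAt_const.sub (continuousAt_const.div hcont hrne)).sub
      ((continuousAt_const.mul (hcont.pow 2)).div_const 3)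
  have hev2 : ∀ᶠ ρ in nhds ρ₀, 0 < 1 - 2*M/r ρ - Λ*(r ρ)^2/3 :=
    hFcont.eventually (eventually_gt_nhds (by simp only [hinit]; exact hc))
  have hev : ∀ᶠ ρ in nhds ρ₀,
      deriv (fun ρ : ℝ => 1 - (1 - 2 * M / r ρ - Λ * (r ρ) ^ 2 / 3) / c) ρ
      = -((2*M/(r ρ)^2 - 2*Λ*(r ρ)/3) * Real.sqrt (1 - 2*M/r ρ - Λ*(r ρ)^2/3))/c := by
    filter_upwards [hev1, hev2] with ρ h1 h2
    exact (key ρ h1 h2).deriv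
  -- positivity at ρ₀ itself
  have hp1 : 0 < r ρ₀ := by rw [hinit]; exact hr₀pos
  have hp2 : 0 < 1 - 2*M/r ρ₀ - Λ*(r ρ₀)^2/3 := by simp only [hinit]; exact hc
  refine ⟨?_, ?_, ?_, ?_⟩
  · rw [hinit, div_self hcne, sub_self]
  · rw [(key ρ₀ hp1 hp2).deriv, hinit, hA0]
    simp
  · -- second derivative
    have hEq : deriv (fun ρ : ℝ => 1 - (1 - 2 * M / r ρ - Λ * (r ρ) ^ 2 / 3) / c)
        =ᶠ[nhds ρ₀] fun ρ =>
          -((2*M/(r ρ)^2 - 2*Λ*(r ρ)/3) * Real.sqrt (1 - 2*M/r ρ - Λ*(r ρ)^2/3))/c := hev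
    rw [hEq.deriv_eq]
    -- HasDerivAt of φ at ρ₀
    have hsne : deriv r ρ₀ ≠ 0 := by rw [hode ρ₀, hinit]; exact ne_of_gt hs0
    have hr' : HasDerivAt r (Real.sqrt (1 - 2*M/r ρ₀ - Λ*(r ρ₀)^2/3)) ρ₀ := by
      have := (differentiableAt_of_deriv_ne_zero hsne).hasDerivAt
      rwa [hode ρ₀] at this
    have hrne : r ρ₀ ≠ 0 := ne_of_gt hp1
    have hF := keyF ρ₀ hp1 hp2
    have hsq := hF.sqrt (ne_of_gt hp2)
    have hA : HasDerivAt (fun ρ => 2*M/(r ρ)^2 - 2*Λ*(r ρ)/3)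
        ((0 * (r ρ₀)^2 - 2*M*(2*(r ρ₀)^1 * Real.sqrt (1 - 2*M/r ρ₀ - Λ*(r ρ₀)^2/3)))/((r ρ₀)^2)^2
          - 2*Λ*Real.sqrt (1 - 2*M/r ρ₀ - Λ*(r ρ₀)^2/3)/3) ρ₀ := by
      have h1 := (hasDerivAt_const ρ₀ (2*M)).div (hr'.pow 2) (pow_ne_zero 2 hrne)
      have h2 := (hr'.const_mul (2*Λ)).div_const 3
      exact h1.sub h2
    have hφ := ((hA.mul hsq).neg).div_const c
    have hφ' : HasDerivAt (fun ρ => -((2*M/(r ρ)^2 - 2*Λ*(r ρ)/3) * Real.sqrt (1 - 2*M/r ρ - Λ*(r ρ)^2/3))/c) _ ρ₀ := hφ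
    rw [hφ'.deriv]
    simp only [hinit]
    rw [← hc_def, hA0]
    have hs2 : Real.sqrt c * Real.sqrt c = c := Real.mul_self_sqrt hc.le
    set s := Real.sqrt c with hs_def
    have hsne' : s ≠ 0 := ne_of_gt hs0
    rw [div_eq_iff hcne, ← hs2]
    field_simp
    ring
  · rw [hr3]
    field_simp
    ring
end
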